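/- With notation as in the orthonormal basis formula, q_n(z) f(z) = K_n(z,0), where K_n(·,0) = Σ_{k=0}^n conj(f(0) φ_k(0)) φ_k f is the reproducing kernel at 0 for the subspace f·𝒫_n: for every polynomial q of degree ≤ n, ⟨qf, q_n f⟩_ω = q(0) f(0). -/

import Mathlib

open scoped BigOperators
open Polynomial Filter

noncomputable section

/-- Coefficient sequence of the product p·f, where f is an analytic function on the disk
given by its Taylor coefficient sequence. -/
def polyMulSeq (p : Polynomial ℂ) (f : ℕ → ℂ) : ℕ → ℂ :=
  fun n => ∑ j ∈ Finset.range (n + 1), p.coeff j * f (n - j)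

/-- The constant function 1 as a Taylor coefficient sequence. -/
def oneSeq : ℕ → ℂ := fun n => if n = 0 then 1 else 0

/-- Membership in the weighted Hardy space H²_ω. -/
def MemHw (ω : ℕ → ℝ) (f : ℕ → ℂ) : Prop :=
  Summable (fun k => ‖f k‖ ^ 2 * ω k)

/-- Squared weighted norm ‖f‖²_ω. -/
def wNormSq (ω : ℕ → ℝ) (f : ℕ → ℂ) : ℝ := ∑' k, ‖f k‖ ^ 2 * ω k

/-- Weighted inner product ⟨f,g⟩_ω. -/
def wInner (ω : ℕ → ℝ) (f g : ℕ → ℂ) : ℂ :=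
  ∑' k, f k * (starRingEnd ℂ) (g k) * (ω k : ℂ)

/-- `q` is the n-th optimal polynomial approximant of 1/f in H²_ω. -/
def IsOPA (ω : ℕ → ℝ) (f : ℕ → ℂ) (n : ℕ) (q : Polynomial ℂ) : Prop :=
  q.natDegree ≤ n ∧
  ∀ p : Polynomial ℂ, p.natDegree ≤ n →
    wNormSq ω (polyMulSeq q f - oneSeq) ≤ wNormSq ω (polyMulSeq p f - oneSeq)

namespace StmtAux
variable {ω : ℕ → ℝ}

lemma summable_inner (hω : ∀ k, 0 < ω k) {u v : ℕ → ℂ} (hu : MemHw ω u) (hv : MemHw ω v) :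
    Summable (fun j => u j * (starRingEnd ℂ) (v j) * (ω j : ℂ)) := by
  apply Summable.of_norm
  have hle : ∀ j, ‖u j * (starRingEnd ℂ) (v j) * (ω j : ℂ)‖
      ≤ (‖u j‖ ^ 2 * ω j + ‖v j‖ ^ 2 * ω j) / 2 := by
    intro j
    have h1 : ‖u j * (starRingEnd ℂ) (v j) * (ω j : ℂ)‖ = ‖u j‖ * ‖v j‖ * ω j := by
      rw [norm_mul, norm_mul, RingHomIsometric.norm_map, Complex.norm_real,
        Real.norm_eq_abs, abs_of_pos (hω j)]
    rw [h1]
    nlinarith [two_mul_le_add_sq ‖u j‖ ‖v j‖, (hω j).le, norm_nonneg (u j), norm_nonneg (v j),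
      sq_nonneg (‖u j‖ - ‖v j‖)]
  refine Summable.of_nonneg_of_le (fun j => norm_nonneg _) hle ?_
  exact (hu.add hv).div_const 2

lemma mul_conj_eq (z : ℂ) : z * (starRingEnd ℂ) z = ((‖z‖ ^ 2 : ℝ) : ℂ) := by
  rw [Complex.mul_conj, Complex.normSq_eq_norm_sq]

lemma inner_term_eq (u : ℕ → ℂ) (j : ℕ) :
    u j * (starRingEnd ℂ) (u j) * (ω j : ℂ) = ((‖u j‖ ^ 2 * ω j : ℝ) : ℂ) := by
  rw [mul_conj_eq, ← Complex.ofReal_mul]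

lemma memHw_of_inner_one {g : ℕ → ℂ} (h : wInner ω g g = 1) : MemHw ω g := by
  by_contra hc
  have hns : ¬ Summable (fun j => g j * (starRingEnd ℂ) (g j) * (ω j : ℂ)) := by
    intro hs
    apply hc
    unfold MemHw
    rw [← Complex.summable_ofReal]
    simpa only [inner_term_eq] using hs
  rw [wInner, tsum_eq_zero_of_not_summable hns] at h
  exact zero_ne_one h

lemma wInner_self {g : ℕ → ℂ} (hg : MemHw ω g) : wInner ω g g = ((wNormSq ω g : ℝ) : ℂ) := by
  rw [wInner, wNormSq]
  simp only [inner_term_eq]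
  exact (Complex.ofRealCLM.map_tsum hg).symm

lemma memHw_of_le {u v w : ℕ → ℂ} (hω : ∀ k, 0 < ω k) (hu : MemHw ω u) (hv : MemHw ω v)
    (h : ∀ j, ‖w j‖ ≤ ‖u j‖ + ‖v j‖) : MemHw ω w := by
  refine Summable.of_nonneg_of_le (fun j => ?_) (fun j => ?_)
    (((hu.add hv).mul_left 2))
  · exact mul_nonneg (by positivity) (hω j).le
  · have h1 := h j
    have h0 := norm_nonneg (w j)
    have h2 : ‖w j‖ ^ 2 ≤ 2 * (‖u j‖ ^ 2 + ‖v j‖ ^ 2) := by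
      nlinarith [mul_self_le_mul_self h0 h1, sq_nonneg (‖u j‖ - ‖v j‖)]
    calc ‖w j‖ ^ 2 * ω j ≤ 2 * (‖u j‖ ^ 2 + ‖v j‖ ^ 2) * ω j :=
          mul_le_mul_of_nonneg_right h2 (hω j).le
      _ = 2 * (‖u j‖ ^ 2 * ω j + ‖v j‖ ^ 2 * ω j) := by ring

lemma memHw_zero : MemHw ω (fun _ => 0) := by simp [MemHw]

lemma memHw_smul (a : ℂ) {u : ℕ → ℂ} (hu : MemHw ω u) : MemHw ω (fun j => a * u j) := by
  have : (fun j => ‖a * u j‖ ^ 2 * ω j) = fun j => ‖a‖ ^ 2 * (‖u j‖ ^ 2 * ω j) := by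
    funext j; rw [norm_mul]; ring
  unfold MemHw
  rw [this]
  exact hu.mul_left _

lemma memHw_sub (hω : ∀ k, 0 < ω k) {u v : ℕ → ℂ} (hu : MemHw ω u) (hv : MemHw ω v) :
    MemHw ω (fun j => u j - v j) :=
  memHw_of_le hω hu hv (fun j => norm_sub_le _ _)

lemma memHw_sum {ι : Type*} (hω : ∀ k, 0 < ω k) (s : Finset ι) (g : ι → ℕ → ℂ)
    (hg : ∀ i ∈ s, MemHw ω (g i)) : MemHw ω (fun j => ∑ i ∈ s, g i j) := by
  classical
  induction s using Finset.cons_induction with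
  | empty => simpa using (memHw_zero (ω := ω))
  | cons i s his ih =>
    simp only [Finset.sum_cons]
    have h1 : MemHw ω (g i) := hg i (Finset.mem_cons_self _ _)
    have h2 : MemHw ω (fun j => ∑ x ∈ s, g x j) :=
      ih (fun x hx => hg x (Finset.mem_cons_of_mem hx))
    exact memHw_of_le hω h1 h2 (fun j => norm_add_le _ _)

lemma memHw_oneSeq : MemHw ω oneSeq := by
  apply summable_of_ne_finset_zero (s := {0})
  intro j hj
  simp only [Finset.mem_singleton] at hj
  simp [oneSeq, hj]

lemma polyMulSeq_sum {ι : Type*} (s : Finset ι) (P : ι → Polynomial ℂ) (a : ι → ℂ)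
    (f : ℕ → ℂ) (m : ℕ) :
    polyMulSeq (∑ i ∈ s, Polynomial.C (a i) * P i) f m
      = ∑ i ∈ s, a i * polyMulSeq (P i) f m := by
  unfold polyMulSeq
  simp only [Polynomial.finset_sum_coeff, Polynomial.coeff_C_mul, Finset.sum_mul,
    Finset.mul_sum]
  rw [Finset.sum_comm]
  exact Finset.sum_congr rfl fun i _ => Finset.sum_congr rfl fun j _ => by ring

lemma polyMulSeq_zero_poly (f : ℕ → ℂ) : polyMulSeq 0 f = fun _ => 0 := by
  funext m; simp [polyMulSeq]

lemma polyMulSeq_apply_zero (p : Polynomial ℂ) (f : ℕ → ℂ) :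
    polyMulSeq p f 0 = p.eval 0 * f 0 := by
  simp [polyMulSeq, Polynomial.coeff_zero_eq_eval_zero]

lemma span_phi (φ : ℕ → Polynomial ℂ) (n : ℕ) (hdeg : ∀ k ≤ n, (φ k).natDegree = k)
    (hne : ∀ k ≤ n, φ k ≠ 0) :
    ∀ m, m ≤ n → ∀ p : Polynomial ℂ, p.natDegree ≤ m →
      ∃ a : ℕ → ℂ, p = ∑ k ∈ Finset.range (m + 1), Polynomial.C (a k) * φ k := by
  intro m
  induction m with
  | zero =>
    intro _ p hp
    have hφ0 : φ 0 = Polynomial.C ((φ 0).coeff 0) :=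
      Polynomial.eq_C_of_natDegree_le_zero (le_of_eq (hdeg 0 (Nat.zero_le n)))
    have hc0 : (φ 0).coeff 0 ≠ 0 := by
      intro h
      apply hne 0 (Nat.zero_le n)
      rw [hφ0, h, map_zero]
    refine ⟨fun _ => p.coeff 0 / (φ 0).coeff 0, ?_⟩
    rw [Finset.sum_range_one]
    conv_lhs => rw [Polynomial.eq_C_of_natDegree_le_zero hp]
    rw [hφ0, ← map_mul]
    simp only [Polynomial.coeff_C_zero]
    rw [div_mul_cancel₀ _ hc0]
  | succ m ih =>
    intro hm p hp
    have hmn : m ≤ n := le_of_lt (Nat.lt_of_lt_of_le (Nat.lt_succ_self m) hm)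
    have hlead : (φ (m + 1)).coeff (m + 1) ≠ 0 := by
      have := hdeg (m + 1) hm
      intro h
      apply hne (m + 1) hm
      have : (φ (m+1)).leadingCoeff = 0 := by
        rw [Polynomial.leadingCoeff, hdeg (m + 1) hm, h]
      exact Polynomial.leadingCoeff_eq_zero.mp this
    set c : ℂ := p.coeff (m + 1) / (φ (m + 1)).coeff (m + 1) with hc
    set r : Polynomial ℂ := p - Polynomial.C c * φ (m + 1) with hr
    have hrd : r.natDegree ≤ m := by
      apply Polynomial.natDegree_le_iff_coeff_eq_zero.mpr
      intro j hj
      have hj1 : m + 1 ≤ j := hj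
      rcases eq_or_lt_of_le hj1 with h | h
      · rw [hr]
        simp only [Polynomial.coeff_sub, Polynomial.coeff_C_mul, ← h]
        rw [hc, div_mul_cancel₀ _ hlead, sub_self]
      · rw [hr]
        simp only [Polynomial.coeff_sub, Polynomial.coeff_C_mul]
        rw [Polynomial.coeff_eq_zero_of_natDegree_lt (lt_of_le_of_lt hp h),
          Polynomial.coeff_eq_zero_of_natDegree_lt (by rw [hdeg (m+1) hm]; exact h),
          mul_zero, sub_self]
    obtain ⟨a, ha⟩ := ih hmn r hrd
    refine ⟨Function.update a (m + 1) c, ?_⟩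
    rw [Finset.sum_range_succ, Function.update_self]
    have : ∑ k ∈ Finset.range (m + 1), Polynomial.C (Function.update a (m + 1) c k) * φ k
        = ∑ k ∈ Finset.range (m + 1), Polynomial.C (a k) * φ k := by
      apply Finset.sum_congr rfl
      intro k hk
      rw [Function.update_of_ne (Nat.ne_of_lt (Finset.mem_range.mp hk))]
    rw [this, ← ha, hr]
    ring

lemma wInner_sum_left {ι : Type*} (hω : ∀ k, 0 < ω k) (s : Finset ι) (c : ι → ℂ)
    (g : ι → ℕ → ℂ) (hg : ∀ i ∈ s, MemHw ω (g i)) {v : ℕ → ℂ} (hv : MemHw ω v) :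
    wInner ω (fun m => ∑ i ∈ s, c i * g i m) v = ∑ i ∈ s, c i * wInner ω (g i) v := by
  unfold wInner
  have hpt : ∀ m, (∑ i ∈ s, c i * g i m) * (starRingEnd ℂ) (v m) * (ω m : ℂ)
      = ∑ i ∈ s, c i * (g i m * (starRingEnd ℂ) (v m) * (ω m : ℂ)) := by
    intro m
    rw [Finset.sum_mul, Finset.sum_mul]
    exact Finset.sum_congr rfl fun i _ => by ring
  simp only [hpt]
  rw [Summable.tsum_finsetSum (fun i hi => ((summable_inner hω (hg i hi) hv).mul_left (c i)))]
  exact Finset.sum_congr rfl fun i _ => tsum_mul_left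

lemma wInner_sum_right {ι : Type*} (hω : ∀ k, 0 < ω k) (s : Finset ι) (c : ι → ℂ)
    (g : ι → ℕ → ℂ) (hg : ∀ i ∈ s, MemHw ω (g i)) {v : ℕ → ℂ} (hv : MemHw ω v) :
    wInner ω v (fun m => ∑ i ∈ s, c i * g i m)
      = ∑ i ∈ s, (starRingEnd ℂ) (c i) * wInner ω v (g i) := by
  unfold wInner
  have hpt : ∀ m, v m * (starRingEnd ℂ) (∑ i ∈ s, c i * g i m) * (ω m : ℂ)
      = ∑ i ∈ s, (starRingEnd ℂ) (c i) * (v m * (starRingEnd ℂ) (g i m) * (ω m : ℂ)) := by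
    intro m
    rw [map_sum, Finset.mul_sum, Finset.sum_mul]
    exact Finset.sum_congr rfl fun i _ => by rw [map_mul]; ring
  simp only [hpt]
  rw [Summable.tsum_finsetSum (fun i hi => ((summable_inner hω hv (hg i hi)).mul_left _))]
  exact Finset.sum_congr rfl fun i _ => tsum_mul_left

lemma wInner_sub_left (hω : ∀ k, 0 < ω k) {u v w : ℕ → ℂ} (hu : MemHw ω u)
    (hv : MemHw ω v) (hw : MemHw ω w) :
    wInner ω (fun m => u m - v m) w = wInner ω u w - wInner ω v w := by
  unfold wInner
  have hpt : ∀ m, (u m - v m) * (starRingEnd ℂ) (w m) * (ω m : ℂ)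
      = u m * (starRingEnd ℂ) (w m) * (ω m : ℂ) - v m * (starRingEnd ℂ) (w m) * (ω m : ℂ) := by
    intro m; ring
  simp only [hpt]
  exact Summable.tsum_sub (summable_inner hω hu hw) (summable_inner hω hv hw)

lemma wInner_sub_right (hω : ∀ k, 0 < ω k) {u v w : ℕ → ℂ} (hu : MemHw ω u)
    (hv : MemHw ω v) (hw : MemHw ω w) :
    wInner ω u (fun m => v m - w m) = wInner ω u v - wInner ω u w := by
  unfold wInner
  have hpt : ∀ m, u m * (starRingEnd ℂ) (v m - w m) * (ω m : ℂ)
      = u m * (starRingEnd ℂ) (v m) * (ω m : ℂ) - u m * (starRingEnd ℂ) (w m) * (ω m : ℂ) := by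
    intro m; rw [map_sub]; ring
  simp only [hpt]
  exact Summable.tsum_sub (summable_inner hω hu hv) (summable_inner hω hu hw)

lemma wInner_oneSeq_right (hω0 : ω 0 = 1) (u : ℕ → ℂ) : wInner ω u oneSeq = u 0 := by
  unfold wInner
  rw [tsum_eq_single 0]
  · simp [oneSeq, hω0]
  · intro j hj
    simp [oneSeq, hj]

lemma wInner_oneSeq_left (hω0 : ω 0 = 1) (u : ℕ → ℂ) :
    wInner ω oneSeq u = (starRingEnd ℂ) (u 0) := by
  unfold wInner
  rw [tsum_eq_single 0]
  · simp [oneSeq, hω0]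
  · intro j hj
    simp [oneSeq, hj]

end StmtAux

open StmtAux in
/-- q_n f = K_n(·,0), the reproducing kernel at 0 for f·𝒫_n:
q_n f = ∑_k conj(f(0) φ_k(0)) φ_k f and ⟨qf, q_n f⟩_ω = q(0) f(0) for all q ∈ 𝒫_n. -/
theorem stmt_7 (ω : ℕ → ℝ) (hω0 : ω 0 = 1) (hωpos : ∀ k, 0 < ω k)
    (f : ℕ → ℂ) (hf : MemHw ω f) (hf0 : f ≠ 0)
    (n : ℕ) (φ : ℕ → Polynomial ℂ)
    (hdeg : ∀ k ≤ n, (φ k).natDegree = k)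
    (horth : ∀ j ≤ n, ∀ k ≤ n,
      wInner ω (polyMulSeq (φ j) f) (polyMulSeq (φ k) f) = if j = k then 1 else 0)
    (q : Polynomial ℂ) (hq : IsOPA ω f n q) :
    (polyMulSeq q f = fun m =>
      ∑ k ∈ Finset.range (n + 1),
        (starRingEnd ℂ) (f 0 * (φ k).eval 0) * polyMulSeq (φ k) f m) ∧
    ∀ p : Polynomial ℂ, p.natDegree ≤ n →
      wInner ω (polyMulSeq p f) (polyMulSeq q f) = p.eval 0 * f 0 := by
  classical
  set g : ℕ → (ℕ → ℂ) := fun k => polyMulSeq (φ k) f with hgdef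
  set b : ℕ → ℂ := fun k => (starRingEnd ℂ) (f 0 * (φ k).eval 0) with hbdef
  -- φ 0 ≠ 0
  have h00 := horth 0 (Nat.zero_le n) 0 (Nat.zero_le n)
  rw [if_pos rfl] at h00
  have hφ0ne : φ 0 ≠ 0 := by
    intro h
    rw [h, polyMulSeq_zero_poly] at h00
    simp [wInner] at h00
  have hφne : ∀ k ≤ n, φ k ≠ 0 := by
    intro k hk
    cases k with
    | zero => exact hφ0ne
    | succ m =>
      intro h
      have := hdeg (m + 1) hk
      rw [h] at this
      simp at this
  -- each g k is in the space
  have hgMem : ∀ k ∈ Finset.range (n + 1), MemHw ω (g k) := by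
    intro k hk
    have hk' : k ≤ n := Nat.lt_succ_iff.mp (Finset.mem_range.mp hk)
    have := horth k hk' k hk'
    rw [if_pos rfl] at this
    exact memHw_of_inner_one this
  -- combinations
  have hcombMem : ∀ d : ℕ → ℂ, MemHw ω (fun m => ∑ k ∈ Finset.range (n + 1), d k * g k m) := by
    intro d
    exact memHw_sum hωpos _ _ (fun k hk => memHw_smul (d k) (hgMem k hk))
  -- inner products of combinations
  have hA : ∀ d e : ℕ → ℂ,
      wInner ω (fun m => ∑ k ∈ Finset.range (n + 1), d k * g k m)
        (fun m => ∑ k ∈ Finset.range (n + 1), e k * g k m)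
      = ∑ k ∈ Finset.range (n + 1), d k * (starRingEnd ℂ) (e k) := by
    intro d e
    rw [wInner_sum_left hωpos _ _ _ hgMem (hcombMem e)]
    apply Finset.sum_congr rfl
    intro k hk
    rw [wInner_sum_right hωpos _ _ _ hgMem (hgMem k hk)]
    have hk' : k ≤ n := Nat.lt_succ_iff.mp (Finset.mem_range.mp hk)
    have hsum : ∑ l ∈ Finset.range (n + 1), (starRingEnd ℂ) (e l) * wInner ω (g k) (g l)
        = (starRingEnd ℂ) (e k) := by
      rw [Finset.sum_eq_single k]
      · rw [horth k hk' k hk', if_pos rfl, mul_one]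
      · intro l hl hlk
        have hl' : l ≤ n := Nat.lt_succ_iff.mp (Finset.mem_range.mp hl)
        rw [horth k hk' l hl', if_neg (fun h => hlk h.symm), mul_zero]
      · intro h
        exact absurd hk h
    rw [hsum]
  -- g k 0
  have hg0 : ∀ k, g k 0 = (φ k).eval 0 * f 0 := fun k => polyMulSeq_apply_zero (φ k) f
  have hbconj : ∀ k, (starRingEnd ℂ) (b k) = f 0 * (φ k).eval 0 := by
    intro k; rw [hbdef]; exact Complex.conj_conj _
  -- inner products with oneSeq
  have hB : ∀ d : ℕ → ℂ,
      wInner ω (fun m => ∑ k ∈ Finset.range (n + 1), d k * g k m) oneSeq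
      = ∑ k ∈ Finset.range (n + 1), d k * (starRingEnd ℂ) (b k) := by
    intro d
    rw [wInner_oneSeq_right hω0]
    apply Finset.sum_congr rfl
    intro k _
    rw [hg0 k, hbconj k]
    ring
  have hC : ∀ d : ℕ → ℂ,
      wInner ω oneSeq (fun m => ∑ k ∈ Finset.range (n + 1), d k * g k m)
      = ∑ k ∈ Finset.range (n + 1), (starRingEnd ℂ) (d k) * b k := by
    intro d
    rw [wInner_oneSeq_left hω0]
    rw [map_sum]
    apply Finset.sum_congr rfl
    intro k _
    rw [map_mul, hg0 k, hbdef]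
    simp only [map_mul]
    ring
  have hOne : wInner ω oneSeq oneSeq = 1 := by
    rw [wInner_oneSeq_right hω0]; simp [oneSeq]
  -- norm expansion
  have hNormExp : ∀ d : ℕ → ℂ,
      wNormSq ω ((fun m => ∑ k ∈ Finset.range (n + 1), d k * g k m) - oneSeq)
      = (∑ k ∈ Finset.range (n + 1), ‖d k - b k‖ ^ 2)
        + (1 - ∑ k ∈ Finset.range (n + 1), ‖b k‖ ^ 2) := by
    intro d
    set u : ℕ → ℂ := fun m => ∑ k ∈ Finset.range (n + 1), d k * g k m with hu
    have huMem : MemHw ω u := hcombMem d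
    have hsubMem : MemHw ω (fun m => u m - oneSeq m) :=
      memHw_sub hωpos huMem memHw_oneSeq
    have hsub_eq : (u - oneSeq) = fun m => u m - oneSeq m := rfl
    have hinner : wInner ω (fun m => u m - oneSeq m) (fun m => u m - oneSeq m)
        = (wInner ω u u - wInner ω u oneSeq)
          - (wInner ω oneSeq u - wInner ω oneSeq oneSeq) := by
      rw [wInner_sub_left hωpos huMem memHw_oneSeq hsubMem,
        wInner_sub_right hωpos huMem huMem memHw_oneSeq,
        wInner_sub_right hωpos memHw_oneSeq huMem memHw_oneSeq]
    rw [hA d d, hB d, hC d, hOne] at hinner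
    have halg : (∑ k ∈ Finset.range (n + 1), d k * (starRingEnd ℂ) (d k)
          - ∑ k ∈ Finset.range (n + 1), d k * (starRingEnd ℂ) (b k))
          - (∑ k ∈ Finset.range (n + 1), (starRingEnd ℂ) (d k) * b k - 1)
        = (∑ k ∈ Finset.range (n + 1), (d k - b k) * (starRingEnd ℂ) (d k - b k))
          + (1 - ∑ k ∈ Finset.range (n + 1), b k * (starRingEnd ℂ) (b k)) := by
      have hterm : ∀ k ∈ Finset.range (n + 1),
          (d k - b k) * (starRingEnd ℂ) (d k - b k)
          = d k * (starRingEnd ℂ) (d k) - d k * (starRingEnd ℂ) (b k)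
            - (starRingEnd ℂ) (d k) * b k + b k * (starRingEnd ℂ) (b k) := by
        intro k _
        rw [map_sub]
        ring
      rw [Finset.sum_congr rfl hterm]
      simp only [Finset.sum_add_distrib, Finset.sum_sub_distrib]
      ring
    rw [halg] at hinner
    have hofReal : wInner ω (fun m => u m - oneSeq m) (fun m => u m - oneSeq m)
        = ((wNormSq ω (fun m => u m - oneSeq m) : ℝ) : ℂ) := wInner_self hsubMem
    have hsum1 : ∑ k ∈ Finset.range (n + 1), (d k - b k) * (starRingEnd ℂ) (d k - b k)
        = ((∑ k ∈ Finset.range (n + 1), ‖d k - b k‖ ^ 2 : ℝ) : ℂ) := by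
      rw [Complex.ofReal_sum]
      exact Finset.sum_congr rfl fun k _ => mul_conj_eq _
    have hsum2 : ∑ k ∈ Finset.range (n + 1), b k * (starRingEnd ℂ) (b k)
        = ((∑ k ∈ Finset.range (n + 1), ‖b k‖ ^ 2 : ℝ) : ℂ) := by
      rw [Complex.ofReal_sum]
      exact Finset.sum_congr rfl fun k _ => mul_conj_eq _
    rw [hofReal, hsum1, hsum2] at hinner
    apply Complex.ofReal_injective
    rw [hsub_eq]
    rw [hinner]
    push_cast
    ring
  -- the coefficient vector of q
  obtain ⟨c, hcspan⟩ := span_phi φ n hdeg hφne n le_rfl q hq.1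
  have hqf : polyMulSeq q f = fun m => ∑ k ∈ Finset.range (n + 1), c k * g k m := by
    funext m
    rw [hcspan]
    exact polyMulSeq_sum _ _ _ _ _
  -- the comparison polynomial
  set p0 : Polynomial ℂ := ∑ k ∈ Finset.range (n + 1), Polynomial.C (b k) * φ k with hp0
  have hp0deg : p0.natDegree ≤ n := by
    apply Polynomial.natDegree_sum_le_of_forall_le
    intro k hk
    refine le_trans (Polynomial.natDegree_C_mul_le _ _) ?_
    rw [hdeg k (Nat.lt_succ_iff.mp (Finset.mem_range.mp hk))]
    exact Nat.lt_succ_iff.mp (Finset.mem_range.mp hk)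
  have hp0f : polyMulSeq p0 f = fun m => ∑ k ∈ Finset.range (n + 1), b k * g k m := by
    funext m
    rw [hp0]
    exact polyMulSeq_sum _ _ _ _ _
  have hmin := hq.2 p0 hp0deg
  rw [hqf, hp0f, hNormExp c, hNormExp b] at hmin
  have hzero : ∑ k ∈ Finset.range (n + 1), ‖c k - b k‖ ^ 2 = 0 := by
    have hb0 : ∑ k ∈ Finset.range (n + 1), ‖b k - b k‖ ^ 2 = 0 := by
      simp
    have hnonneg : (0 : ℝ) ≤ ∑ k ∈ Finset.range (n + 1), ‖c k - b k‖ ^ 2 :=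
      Finset.sum_nonneg fun k _ => sq_nonneg _
    linarith [hmin, hb0]
  have hcb : ∀ k ∈ Finset.range (n + 1), c k = b k := by
    intro k hk
    have := (Finset.sum_eq_zero_iff_of_nonneg (fun k _ => sq_nonneg ‖c k - b k‖)).mp hzero k hk
    have hnorm : ‖c k - b k‖ = 0 := by
      nlinarith [norm_nonneg (c k - b k)]
    rw [norm_eq_zero, sub_eq_zero] at hnorm
    exact hnorm
  have hqfb : polyMulSeq q f = fun m => ∑ k ∈ Finset.range (n + 1), b k * g k m := by
    rw [hqf]
    funext m
    exact Finset.sum_congr rfl fun k hk => by rw [hcb k hk]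
  constructor
  · exact hqfb
  · intro p hp
    obtain ⟨a, haspan⟩ := span_phi φ n hdeg hφne n le_rfl p hp
    have hpf : polyMulSeq p f = fun m => ∑ k ∈ Finset.range (n + 1), a k * g k m := by
      funext m
      rw [haspan]
      exact polyMulSeq_sum _ _ _ _ _
    rw [hpf, hqfb, hA a b]
    have hpe : p.eval 0 = ∑ k ∈ Finset.range (n + 1), a k * (φ k).eval 0 := by
      rw [haspan, Polynomial.eval_finset_sum]
      exact Finset.sum_congr rfl fun k _ => by
        rw [Polynomial.eval_mul, Polynomial.eval_C]
    rw [hpe, Finset.sum_mul]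
    apply Finset.sum_congr rfl
    intro k _
    rw [hbconj k]
    ring
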